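/- Let c < 0, g > 0, ε ∈ {−1, 1}, and let a be a constant with φ₀^- < a < c/2. Let I be an open interval containing 0 and let φ : I → ℝ be differentiable with φ(0) = a such that for every ξ ∈ I: φ₀^- < φ(ξ) < c/2, φ(ξ)² + l₁φ(ξ) + l₂ > 0, 2√(φ(ξ)² + l₁φ(ξ) + l₂) + 2φ(ξ) + l₁ > 0, 2√(a₁)·√(φ(ξ)² + l₁φ(ξ) + l₂) + b₁φ(ξ) + l₃ > 0, and φ′(ξ) = ε·(φ(ξ) − φ₀^-)·√(φ(ξ)² + l₁φ(ξ) + l₂)/(2φ(ξ)). Then β₁(φ(ξ)) = β₁(a)·exp(εξ/2) for all ξ ∈ I. (The case ε = −1 is the kink-like wave solution φ₁ of equation (3.3), and ε = 1 is the antikink-like wave solution φ₂ of equation (3.4).) -/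

import Mathlib

private lemma osmosis_aux_deriv (l1 l2 l3 b1 φ0m α1 r ε : ℝ) (φ : ℝ → ℝ) (ξ : ℝ)
    (x p v : ℝ) (hx : x = φ ξ) (hp : p = Real.sqrt (x ^ 2 + l1 * x + l2))
    (hQpos : 0 < x ^ 2 + l1 * x + l2)
    (hxne : x ≠ 0) (hxm0 : x - φ0m ≠ 0)
    (hNpos : 0 < 2 * p + 2 * x + l1)
    (hDpos : 0 < 2 * r * p + b1 * x + l3)
    (hr0 : 0 < r)
    (hα1r : α1 * r = φ0m)
    (h2l : 2 * (x ^ 2 + l1 * x + l2) - (x - φ0m) * (2 * x + l1) = b1 * x + l3)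
    (hl3b : l3 + b1 * φ0m = 2 * r ^ 2)
    (hv : v = ε * (x - φ0m) * p / (2 * x))
    (hφ' : HasDerivAt φ v ξ) :
    HasDerivAt (fun t => Real.log (2 * Real.sqrt ((φ t) ^ 2 + l1 * φ t + l2) + 2 * φ t + l1)
      + α1 * Real.log (φ t - φ0m)
      - α1 * Real.log (2 * r * Real.sqrt ((φ t) ^ 2 + l1 * φ t + l2) + b1 * φ t + l3)
      - ε * t / 2) 0 ξ := by
  have hp0 : 0 < p := hp ▸ Real.sqrt_pos.mpr hQpos
  have hp2 : p ^ 2 = x ^ 2 + l1 * x + l2 := by rw [hp]; exact Real.sq_sqrt hQpos.le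
  have hsqp : Real.sqrt ((φ ξ) ^ 2 + l1 * φ ξ + l2) = p := by rw [hp, hx]
  -- derivative of the inner quadratic
  have hQ' : HasDerivAt (fun t => (φ t) ^ 2 + l1 * φ t + l2) (2 * x * v + l1 * v) ξ := by
    have h := ((hφ'.pow 2).add (hφ'.const_mul l1)).add_const l2
    refine h.congr_deriv ?_
    rw [hx]; push_cast; ring
  have hQne : (φ ξ) ^ 2 + l1 * φ ξ + l2 ≠ 0 := by rw [← hx]; exact hQpos.ne'
  have hsq : HasDerivAt (fun t => Real.sqrt ((φ t) ^ 2 + l1 * φ t + l2))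
      ((2 * x * v + l1 * v) / (2 * p)) ξ := by
    have h := hQ'.sqrt hQne
    rwa [hsqp] at h
  -- the three logs
  have hN0 : 2 * Real.sqrt ((φ ξ) ^ 2 + l1 * φ ξ + l2) + 2 * φ ξ + l1 ≠ 0 := by
    rw [hsqp, ← hx]; exact hNpos.ne'
  have hg1 : HasDerivAt
      (fun t => Real.log (2 * Real.sqrt ((φ t) ^ 2 + l1 * φ t + l2) + 2 * φ t + l1))
      ((2 * ((2 * x * v + l1 * v) / (2 * p)) + 2 * v) / (2 * p + 2 * x + l1)) ξ := by
    have h := (((hsq.const_mul 2).add (hφ'.const_mul 2)).add_const l1).log hN0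
    simp only [Pi.add_apply, hsqp, ← hx, ← hp] at h
    exact h
  have hg2 : HasDerivAt (fun t => Real.log (φ t - φ0m)) (v / (x - φ0m)) ξ := by
    have h := (hφ'.sub_const φ0m).log (by rw [← hx]; exact hxm0)
    simp only [← hx] at h
    exact h
  have hD0 : 2 * r * Real.sqrt ((φ ξ) ^ 2 + l1 * φ ξ + l2) + b1 * φ ξ + l3 ≠ 0 := by
    rw [hsqp, ← hx]; exact hDpos.ne'
  have hg3 : HasDerivAt
      (fun t => Real.log (2 * r * Real.sqrt ((φ t) ^ 2 + l1 * φ t + l2) + b1 * φ t + l3))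
      ((2 * r * ((2 * x * v + l1 * v) / (2 * p)) + b1 * v) / (2 * r * p + b1 * x + l3)) ξ := by
    have h := (((hsq.const_mul (2 * r)).add (hφ'.const_mul b1)).add_const l3).log hD0
    simp only [Pi.add_apply, hsqp, ← hx, ← hp] at h
    exact h
  have hlin : HasDerivAt (fun t : ℝ => ε * t / 2) (ε / 2) ξ := by
    simpa using ((hasDerivAt_id ξ).const_mul ε).div_const 2
  have hF := ((hg1.add (hg2.const_mul α1)).sub (hg3.const_mul α1)).sub hlin
  -- the key algebraic identity
  have hbr : p * (2 * r * p + b1 * x + l3) - (x - φ0m) * (r * (2 * x + l1) + b1 * p)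
      = r * (b1 * x + l3) + 2 * r ^ 2 * p := by
    linear_combination (2 * r) * hp2 + r * h2l + p * hl3b
  have hkey : α1 * (p * (2 * r * p + b1 * x + l3) - (x - φ0m) * (r * (2 * x + l1) + b1 * p))
      = φ0m * (2 * r * p + b1 * x + l3) := by
    rw [hbr]
    linear_combination (b1 * x + l3 + 2 * r * p) * hα1r
  have hN0' : 2 * p + 2 * x + l1 ≠ 0 := hNpos.ne'
  have hD0' : 2 * r * p + b1 * x + l3 ≠ 0 := hDpos.ne'
  have hp0' : p ≠ 0 := hp0.ne'
  have hT1 : (2 * ((2 * x * v + l1 * v) / (2 * p)) + 2 * v) / (2 * p + 2 * x + l1)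
      = ε * (x - φ0m) / (2 * x) := by
    rw [hv]; field_simp
    rw [show 2 * x + l1 + 2 * p = 2 * (p + x) + l1 by ring, mul_div_assoc,
      div_self (by intro h; apply hN0'; linarith), mul_one]
  have hT2 : v / (x - φ0m) = ε * p / (2 * x) := by
    rw [hv]; field_simp
  have hT3 : (2 * r * ((2 * x * v + l1 * v) / (2 * p)) + b1 * v) / (2 * r * p + b1 * x + l3)
      = ε * ((x - φ0m) * (r * (2 * x + l1) + b1 * p)) / (2 * x * (2 * r * p + b1 * x + l3)) := by
    rw [hv]; field_simp
  have hzero : (2 * ((2 * x * v + l1 * v) / (2 * p)) + 2 * v) / (2 * p + 2 * x + l1)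
      + α1 * (v / (x - φ0m))
      - α1 * ((2 * r * ((2 * x * v + l1 * v) / (2 * p)) + b1 * v) / (2 * r * p + b1 * x + l3))
      - ε / 2 = 0 := by
    rw [hT1, hT2, hT3]
    field_simp
    have hD'' : 2 * p * r + x * b1 + l3 ≠ 0 := by intro h; apply hD0'; linarith
    rw [div_eq_mul_inv]
    linear_combination (ε * (2 * p * r + x * b1 + l3)⁻¹) * hkey
      - (ε * (α1 * p - φ0m)) * mul_inv_cancel₀ hD''
  exact hzero ▸ hF

/-- kink-like (ε = −1, eq. (3.3)) and antikink-like (ε = 1, eq. (3.4))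
wave solutions of the osmosis K(2,2) equation for `c < 0`, `g > 0`:
a solution of the orbit equation through `a ∈ (φ₀^-, c/2)` satisfies
`β₁(φ(ξ)) = β₁(a)·exp(εξ/2)`. -/
theorem osmosis_K22_kink_like_c_neg_g_pos
    (c g : ℝ) (hc : c < 0) (hg : 0 < g)
    (ε : ℝ) (hε : ε = -1 ∨ ε = 1)
    (s φ0m l1 l2 l3 a1 b1 α1 : ℝ)
    (hs : s = Real.sqrt (c ^ 2 + 4 * g))
    (hφ0m : φ0m = (c - s) / 2)
    (hl1 : l1 = -(c + 3 * s) / 3)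
    (hl2 : l2 = (c ^ 2 + 6 * g - c * s) / 6)
    (hl3 : l3 = (2 / 3) * (c ^ 2 + 6 * g - c * s))
    (ha1 : a1 = c ^ 2 + 4 * g - c * s)
    (hb1 : b1 = (2 * c - 6 * s) / 3)
    (hα1 : α1 = (c - s) / (2 * Real.sqrt a1))
    (β₁ : ℝ → ℝ)
    (hβ₁ : ∀ x : ℝ, β₁ x =
      (2 * Real.sqrt (x ^ 2 + l1 * x + l2) + 2 * x + l1) * (x - φ0m) ^ α1 /
        (2 * Real.sqrt a1 * Real.sqrt (x ^ 2 + l1 * x + l2) + b1 * x + l3) ^ α1)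
    (a : ℝ) (ha : φ0m < a ∧ a < c / 2)
    (I : Set ℝ) (hI : IsOpen I) (hIconv : Convex ℝ I) (h0I : (0:ℝ) ∈ I)
    (φ : ℝ → ℝ) (hφ0 : φ 0 = a)
    (hrange : ∀ ξ ∈ I, φ0m < φ ξ ∧ φ ξ < c / 2)
    (hq : ∀ ξ ∈ I, 0 < (φ ξ) ^ 2 + l1 * φ ξ + l2)
    (hnum : ∀ ξ ∈ I, 0 < 2 * Real.sqrt ((φ ξ) ^ 2 + l1 * φ ξ + l2) + 2 * φ ξ + l1)
    (hden : ∀ ξ ∈ I,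
      0 < 2 * Real.sqrt a1 * Real.sqrt ((φ ξ) ^ 2 + l1 * φ ξ + l2) + b1 * φ ξ + l3)
    (horb : ∀ ξ ∈ I, HasDerivAt φ
      (ε * (φ ξ - φ0m) * Real.sqrt ((φ ξ) ^ 2 + l1 * φ ξ + l2) / (2 * φ ξ)) ξ) :
    ∀ ξ ∈ I, β₁ (φ ξ) = β₁ a * Real.exp (ε * ξ / 2) := by
  have hcg : 0 < c ^ 2 + 4 * g := by positivity
  have hs0 : 0 < s := by rw [hs]; exact Real.sqrt_pos.mpr hcg
  have hs2 : s ^ 2 = c ^ 2 + 4 * g := by rw [hs]; exact Real.sq_sqrt hcg.le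
  have hcs : c * s < 0 := mul_neg_of_neg_of_pos hc hs0
  have ha1pos : 0 < a1 := by rw [ha1]; linarith
  have hr0 : 0 < Real.sqrt a1 := Real.sqrt_pos.mpr ha1pos
  have hr2 : (Real.sqrt a1) ^ 2 = a1 := Real.sq_sqrt ha1pos.le
  have hα1r : α1 * Real.sqrt a1 = φ0m := by
    rw [hα1, hφ0m]; field_simp
  have h2l : ∀ x : ℝ, 2 * (x ^ 2 + l1 * x + l2) - (x - φ0m) * (2 * x + l1) = b1 * x + l3 := by
    intro x; rw [hl1, hl2, hl3, hb1, hφ0m]; linear_combination hs2 / 2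
  have hl3b : l3 + b1 * φ0m = 2 * (Real.sqrt a1) ^ 2 := by
    rw [hr2, hl3, hb1, hφ0m, ha1]; linear_combination hs2
  have hc2 : c / 2 < 0 := by linarith
  set F : ℝ → ℝ := fun t =>
    Real.log (2 * Real.sqrt ((φ t) ^ 2 + l1 * φ t + l2) + 2 * φ t + l1)
      + α1 * Real.log (φ t - φ0m)
      - α1 * Real.log (2 * Real.sqrt a1 * Real.sqrt ((φ t) ^ 2 + l1 * φ t + l2) + b1 * φ t + l3)
      - ε * t / 2 with hFdef
  have hFd : ∀ t ∈ I, HasDerivAt F 0 t := by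
    intro t ht
    obtain ⟨h1, h2⟩ := hrange t ht
    have hx0 : φ t < 0 := h2.trans hc2
    rw [hFdef]
    exact osmosis_aux_deriv l1 l2 l3 b1 φ0m α1 (Real.sqrt a1) ε φ t (φ t)
      (Real.sqrt ((φ t) ^ 2 + l1 * φ t + l2)) _ rfl rfl (hq t ht) hx0.ne
      (sub_ne_zero.mpr h1.ne') (hnum t ht) (hden t ht) hr0 hα1r (h2l (φ t)) hl3b rfl
      (horb t ht)
  have hdiff : DifferentiableOn ℝ F I := fun t ht =>
    (hFd t ht).differentiableAt.differentiableWithinAt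
  have hfz : ∀ t ∈ I, fderivWithin ℝ F I t = 0 := by
    intro t ht
    have h1 : HasFDerivAt F (0 : ℝ →L[ℝ] ℝ) t := by
      have h2 := (hFd t ht).hasFDerivAt
      convert h2 using 1
      ext y
      simp
      simp
    exact h1.hasFDerivWithinAt.fderivWithin (hI.uniqueDiffWithinAt ht)
  have hconst : ∀ t ∈ I, F t = F 0 := fun t ht =>
    hIconv.is_const_of_fderivWithin_eq_zero hdiff hfz ht h0I
  have hβexp : ∀ t ∈ I, β₁ (φ t) = Real.exp (F t + ε * t / 2) := by
    intro t ht
    obtain ⟨h1, h2⟩ := hrange t ht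
    have hxm : 0 < φ t - φ0m := sub_pos.mpr h1
    have hN := hnum t ht
    have hD := hden t ht
    rw [hβ₁, Real.rpow_def_of_pos hxm, Real.rpow_def_of_pos hD, ← Real.exp_log hN,
      ← Real.exp_add, ← Real.exp_sub]
    congr 1
    simp only [hFdef]
    ring
  intro ξ hξ
  rw [hβexp ξ hξ, hconst ξ hξ]
  have e0 := hβexp 0 h0I
  rw [hφ0] at e0
  rw [e0, ← Real.exp_add]
  congr 1
  ring
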